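/- Let 𝔘 be a preconformal algebra over a field k of characteristic zero, let S ⊆ 𝔘 be a subset with a function d : S → ℤ, and for i ∈ ℤ let 𝔘_i be the k-span of all elements D^m w, where m ∈ ℕ and w = a_1(m_1)⋯a_{l−1}(m_{l−1})a_l is a monomial in S (arbitrary placement of parentheses, a_j ∈ S, m_j ∈ ℕ) with d(a_1)+⋯+d(a_l)+m_1+⋯+m_{l−1} − m ≥ i. Then for all i, j ∈ ℤ and n ∈ ℕ one has 𝔘_i (n) 𝔘_j ⊆ 𝔘_{i+j+n}, and D𝔘_i ⊆ 𝔘_{i−1}. -/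
import Mathlib


open Finset

/-- A (bundled) preconformal algebra over a field `𝕜`: only the axiom (C2) is assumed,
no finiteness axiom (C1). -/
structure PreConfAlg (𝕜 : Type) [Field 𝕜] where
  A : Type
  [ag : AddCommGroup A]
  [mo : Module 𝕜 A]
  mul : ℕ → A →ₗ[𝕜] A →ₗ[𝕜] A
  D : A →ₗ[𝕜] A
  dmul_zero : ∀ a b : A, mul 0 (D a) b = 0
  dmul_succ : ∀ (n : ℕ) (a b : A), mul (n + 1) (D a) b = (-(n + 1 : 𝕜)) • mul n a b
  leibniz : ∀ (n : ℕ) (a b : A), D (mul n a b) = mul n (D a) b + mul n a (D b)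

attribute [instance] PreConfAlg.ag PreConfAlg.mo

variable {𝕜 : Type} [Field 𝕜]

/-- Divided power of the derivation: `D^{(s)} = D^s / s!`. -/
noncomputable def PreConfAlg.dpow (C : PreConfAlg 𝕜) (s : ℕ) (a : C.A) : C.A :=
  (s.factorial : 𝕜)⁻¹ • (C.D ^ s) a

/-- Monomials in a subset `S`, with the value `d(a_1)+⋯+d(a_l)+m_1+⋯+m_{l-1}`. -/
inductive PreConfAlg.IsMonV (C : PreConfAlg 𝕜) (S : Set C.A) (d : C.A → ℤ) : C.A → ℤ → Prop
  | base (a : C.A) : a ∈ S → PreConfAlg.IsMonV C S d a (d a)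
  | mul (n : ℕ) {a b : C.A} {va vb : ℤ} :
      PreConfAlg.IsMonV C S d a va → PreConfAlg.IsMonV C S d b vb →
      PreConfAlg.IsMonV C S d (C.mul n a b) (va + vb + n)

/-- The filtration `𝔘_i`. -/
def PreConfAlg.Uf (C : PreConfAlg 𝕜) (S : Set C.A) (d : C.A → ℤ) (i : ℤ) :
    Submodule 𝕜 C.A :=
  Submodule.span 𝕜 {x : C.A | ∃ (m : ℕ) (w : C.A) (v : ℤ),
    C.IsMonV S d w v ∧ x = (C.D ^ m) w ∧ i ≤ v - m}

namespace PreConfAlg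

variable (C : PreConfAlg 𝕜) (S : Set C.A) (d : C.A → ℤ)

lemma Uf_antitone {i i' : ℤ} (h : i ≤ i') : C.Uf S d i' ≤ C.Uf S d i := by
  apply Submodule.span_mono
  rintro x ⟨m, w, v, hw, rfl, hv⟩
  exact ⟨m, w, v, hw, rfl, h.trans hv⟩

lemma mem_Uf_gen {m : ℕ} {w : C.A} {v : ℤ} (hw : C.IsMonV S d w v) :
    (C.D ^ m) w ∈ C.Uf S d (v - m) :=
  Submodule.subset_span ⟨m, w, v, hw, rfl, le_refl _⟩

lemma D_Uf {i : ℤ} {x : C.A} (hx : x ∈ C.Uf S d i) : C.D x ∈ C.Uf S d (i - 1) := by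
  induction hx using Submodule.span_induction with
  | mem x hx =>
      obtain ⟨m, w, v, hw, rfl, hv⟩ := hx
      have h1 : C.D ((C.D ^ m) w) = (C.D ^ (m + 1)) w := by
        rw [pow_succ']; rfl
      rw [h1]
      refine Submodule.subset_span ⟨m + 1, w, v, hw, rfl, ?_⟩
      push_cast; omega
  | zero => simp
  | add x y _ _ hx hy => rw [map_add]; exact add_mem hx hy
  | smul c x _ hx => rw [map_smul]; exact Submodule.smul_mem _ _ hx

lemma mul_pow_mem : ∀ (m' m n : ℕ) {w w' : C.A} {v v' : ℤ},
    C.IsMonV S d w v → C.IsMonV S d w' v' →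
    C.mul n ((C.D ^ m) w) ((C.D ^ m') w') ∈ C.Uf S d ((v - m) + (v' - m') + n) := by
  intro m'
  induction m' with
  | zero =>
      intro m
      induction m with
      | zero =>
          intro n w w' v v' hw hw'
          simp only [pow_zero, Module.End.one_apply]
          have := C.mem_Uf_gen S d (m := 0) (IsMonV.mul n hw hw')
          simp only [pow_zero, Module.End.one_apply] at this
          refine Uf_antitone C S d ?_ this
          push_cast; omega
      | succ m ih =>
          intro n w w' v v' hw hw'
          have h1 : (C.D ^ (m + 1)) w = C.D ((C.D ^ m) w) := by
            rw [pow_succ']; rfl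
          rw [h1]
          cases n with
          | zero =>
              rw [C.dmul_zero]
              exact Submodule.zero_mem _
          | succ s =>
              rw [C.dmul_succ]
              refine Submodule.smul_mem _ _ ?_
              have := ih s hw hw'
              refine Uf_antitone C S d ?_ this
              push_cast; omega
  | succ m'' ih =>
      intro m n w w' v v' hw hw'
      have h1 : (C.D ^ (m'' + 1)) w' = C.D ((C.D ^ m'') w') := by
        rw [pow_succ']; rfl
      rw [h1]
      have hle : C.mul n ((C.D ^ m) w) (C.D ((C.D ^ m'') w')) =
          C.D (C.mul n ((C.D ^ m) w) ((C.D ^ m'') w'))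
            - C.mul n (C.D ((C.D ^ m) w)) ((C.D ^ m'') w') := by
        rw [C.leibniz]; abel
      rw [hle]
      have hD : C.D (C.mul n ((C.D ^ m) w) ((C.D ^ m'') w')) ∈
          C.Uf S d ((v - m) + (v' - m'') + n - 1) :=
        C.D_Uf S d (ih m n hw hw')
      have h2 : C.D ((C.D ^ m) w) = (C.D ^ (m + 1)) w := by
        rw [pow_succ']; rfl
      have hB : C.mul n (C.D ((C.D ^ m) w)) ((C.D ^ m'') w') ∈
          C.Uf S d ((v - (m + 1)) + (v' - m'') + n) := by
        rw [h2]; exact ih (m + 1) n hw hw'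
      refine sub_mem (Uf_antitone C S d ?_ hD) (Uf_antitone C S d ?_ hB) <;> (push_cast; omega)

end PreConfAlg

/-- `𝔘_i (n) 𝔘_j ⊆ 𝔘_{i+j+n}` and `D𝔘_i ⊆ 𝔘_{i-1}`. -/
theorem filtration_Uf_mul_and_D
    [CharZero 𝕜] (C : PreConfAlg 𝕜) (S : Set C.A) (d : C.A → ℤ) :
    (∀ (i j : ℤ) (n : ℕ) (x y : C.A),
        x ∈ C.Uf S d i → y ∈ C.Uf S d j → C.mul n x y ∈ C.Uf S d (i + j + n)) ∧
    (∀ (i : ℤ) (x : C.A), x ∈ C.Uf S d i → C.D x ∈ C.Uf S d (i - 1)) := by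
  constructor
  · intro i j n x y hx hy
    induction hx using Submodule.span_induction with
    | mem x hxg =>
        induction hy using Submodule.span_induction with
        | mem y hyg =>
            obtain ⟨m, w, v, hw, rfl, hv⟩ := hxg
            obtain ⟨m', w', v', hw', rfl, hv'⟩ := hyg
            refine PreConfAlg.Uf_antitone C S d ?_ (C.mul_pow_mem S d m' m n hw hw')
            omega
        | zero => simp
        | add y z _ _ hy hz => rw [map_add]; exact add_mem hy hz
        | smul c y _ hy => rw [map_smul]; exact Submodule.smul_mem _ _ hy
    | zero => simp
    | add x z _ _ hx' hz => rw [map_add, LinearMap.add_apply]; exact add_mem hx' hz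
    | smul c x _ hx' => rw [map_smul, LinearMap.smul_apply]; exact Submodule.smul_mem _ _ hx'
  · intro i x hx
    exact C.D_Uf S d hx
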